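/- arXiv:2604.23206 — 2 statements merged into one kernel-verified Lean document; each statement's English description precedes it below -/
import Mathlib

section
/- Let m be a nonzero integer and let w ∈ ℚ[[u]] be a formal power series with zero constant coefficient satisfying w = u·(1 + w)^m. Then (1 + (1 − m)·w) · Σ_{k≥0} C(m·k, k)·u^k = 1 + w in ℚ[[u]]. -/
open PowerSeries

/-- Generalized binomial coefficient `C(a, b) = a(a-1)⋯(a-b+1)/b!` for `a : ℚ`, `b : ℕ`. -/
noncomputable def gchoose (a : ℚ) (b : ℕ) : ℚ :=
  (∏ i ∈ Finset.range b, (a - i)) / (Nat.factorial b)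

/-- Integer power of a formal power series over `ℚ`: for nonnegative exponents the ordinary
power, for negative exponents the power of the inverse (`PowerSeries.inv`), which for a unit
(e.g. constant coefficient `1`) coincides with the power taken in the group of units. -/
noncomputable def psZpow (f : PowerSeries ℚ) (m : ℤ) : PowerSeries ℚ :=
  if 0 ≤ m then f ^ m.toNat else f⁻¹ ^ (-m).toNat

lemma gchoose_zero_right (a : ℚ) : gchoose a 0 = 1 := by simp [gchoose]

lemma gchoose_zero_left (n : ℕ) (hn : n ≠ 0) : gchoose 0 n = 0 := by
  obtain ⟨k, rfl⟩ := Nat.exists_eq_succ_of_ne_zero hn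
  simp [gchoose, Finset.prod_range_succ']

lemma gchoose_pascal (a : ℚ) (n : ℕ) :
    gchoose (a + 1) (n + 1) = gchoose a (n + 1) + gchoose a n := by
  have p1 : (∏ i ∈ Finset.range (n+1), (a + 1 - i)) = (a+1) * ∏ i ∈ Finset.range n, (a - i) := by
    rw [Finset.prod_range_succ']
    push_cast
    simp only [add_sub_add_right_eq_sub]
    ring
  have p2 : (∏ i ∈ Finset.range (n+1), (a - i)) = (∏ i ∈ Finset.range n, (a - i)) * (a - n) :=
    Finset.prod_range_succ _ _
  have h1 : ((n+1).factorial : ℚ) ≠ 0 := by positivity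
  have h2 : ((n).factorial : ℚ) ≠ 0 := by positivity
  rw [gchoose, gchoose, gchoose, p1, p2, Nat.factorial_succ]
  push_cast
  field_simp
  ring

section
variable (f : PowerSeries ℚ)

noncomputable def psU (hf : constantCoeff f ≠ 0) : (PowerSeries ℚ)ˣ :=
  Units.mkOfMulEqOne f f⁻¹ (PowerSeries.mul_inv_cancel f hf)

lemma psZpow_eq (hf : constantCoeff f ≠ 0) (r : ℤ) :
    psZpow f r = ((psU f hf ^ r : (PowerSeries ℚ)ˣ) : PowerSeries ℚ) := by
  rcases r with n | n
  · rw [Int.ofNat_eq_coe, zpow_natCast, Units.val_pow_eq_pow_val]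
    simp [psZpow, psU]
  · rw [zpow_negSucc, ← inv_pow, Units.val_pow_eq_pow_val]
    have : ((psU f hf)⁻¹ : (PowerSeries ℚ)ˣ) = (f⁻¹ : PowerSeries ℚ) := rfl
    rw [this]
    simp [psZpow, Int.negSucc_lt_zero]

lemma psZpow_add (hf : constantCoeff f ≠ 0) (a b : ℤ) :
    psZpow f a * psZpow f b = psZpow f (a + b) := by
  rw [psZpow_eq f hf, psZpow_eq f hf, psZpow_eq f hf, ← Units.val_mul, ← zpow_add]

lemma psZpow_zero : psZpow f 0 = 1 := by simp [psZpow]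

lemma psZpow_one : psZpow f 1 = f := by simp [psZpow]

lemma psZpow_neg_one : psZpow f (-1) = f⁻¹ := by
  rw [psZpow]; norm_num

lemma constantCoeff_psZpow (hf1 : constantCoeff f = 1) (r : ℤ) :
    constantCoeff (psZpow f r) = 1 := by
  rcases r with n | n
  · simp [psZpow, map_pow, hf1]
  · have : constantCoeff f⁻¹ = 1 := by
      rw [PowerSeries.constantCoeff_inv, hf1]; norm_num
    simp [psZpow, Int.negSucc_lt_zero, map_pow, this]

lemma psZpow_deriv (hf : constantCoeff f ≠ 0) (r : ℤ) :
    d⁄dX ℚ (psZpow f r) = PowerSeries.C (r : ℚ) * psZpow f (r - 1) * d⁄dX ℚ f := by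
  have add' : ∀ a b c : ℤ, a + b = c → psZpow f a * psZpow f b = psZpow f c :=
    fun a b c h => h ▸ psZpow_add f hf a b
  induction r using Int.induction_on with
  | zero => simp [psZpow_zero]
  | succ k ih =>
    have h1 : f * psZpow f (k : ℤ) = psZpow f ((k : ℤ) + 1) := by
      have := add' 1 k ((k : ℤ) + 1) (by ring)
      rwa [psZpow_one] at this
    have h2 : f * psZpow f ((k : ℤ) - 1) = psZpow f (k : ℤ) := by
      have := add' 1 ((k : ℤ) - 1) (k : ℤ) (by ring)
      rwa [psZpow_one] at this
    have h3 : psZpow f ((k : ℤ) + 1 - 1) = psZpow f (k : ℤ) := by congr 1; ring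
    have c2 : PowerSeries.C (((k : ℤ) + 1 : ℤ) : ℚ) = PowerSeries.C ((k : ℤ) : ℚ) + 1 := by
      push_cast; rw [map_add, map_one]
    rw [← h1, Derivation.leibniz, smul_eq_mul, smul_eq_mul, ih, h3, c2]
    linear_combination (PowerSeries.C ((k : ℤ) : ℚ) * d⁄dX ℚ f) * h2
  | pred k ih =>
    have h1 : psZpow f (-(k : ℤ)) * f⁻¹ = psZpow f (-(k : ℤ) - 1) := by
      have := add' (-(k : ℤ)) (-1) (-(k : ℤ) - 1) (by ring)
      rwa [psZpow_neg_one] at this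
    have q1 : psZpow f (-(k:ℤ)) * f⁻¹ ^ 2 = psZpow f (-(k:ℤ) - 1 - 1) := by
      rw [pow_two, ← psZpow_neg_one f, ← mul_assoc, add' (-(k:ℤ)) (-1) (-(k:ℤ)-1) (by ring),
        add' (-(k:ℤ)-1) (-1) (-(k:ℤ)-1-1) (by ring)]
    have q2 : f⁻¹ * psZpow f (-(k:ℤ) - 1) = psZpow f (-(k:ℤ) - 1 - 1) := by
      rw [← psZpow_neg_one f, add' (-1) (-(k:ℤ)-1) (-(k:ℤ)-1-1) (by ring)]
    have c1 : PowerSeries.C ((-(k:ℤ) - 1 : ℤ) : ℚ) = PowerSeries.C ((-(k:ℤ) : ℤ) : ℚ) - 1 := by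
      push_cast; rw [map_sub, map_one]
    rw [← h1, Derivation.leibniz, smul_eq_mul, smul_eq_mul, ih, derivative_inv', c1]
    linear_combination (-(d⁄dX ℚ f)) * q1 + (PowerSeries.C ((-(k:ℤ) : ℤ) : ℚ) * d⁄dX ℚ f) * q2
end

/-- If `w` has zero constant coefficient and satisfies `w = u(1+w)^m`, then
`(1 + (1−m)w) · Σ_{k≥0} C(mk, k) u^k = 1 + w`. -/
theorem generating_function_identity (m : ℤ) (hm : m ≠ 0) (w : PowerSeries ℚ)
    (hw0 : constantCoeff w = 0) (hw : w = X * psZpow (1 + w) m) :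
    (1 + PowerSeries.C (1 - (m : ℚ)) * w) *
        (PowerSeries.mk fun k => gchoose ((m : ℚ) * k) k) = 1 + w := by
  set Z : ℤ → PowerSeries ℚ := psZpow (1 + w) with hZdef
  have hT1 : constantCoeff (1 + w) = 1 := by simp [hw0]
  have hT0 : constantCoeff (1 + w) ≠ 0 := by rw [hT1]; norm_num
  have add' : ∀ a b c : ℤ, a + b = c → Z a * Z b = Z c :=
    fun a b c h => h ▸ psZpow_add (1 + w) hT0 a b
  have z1 : Z 1 = 1 + w := psZpow_one (1 + w)
  have z0 : Z 0 = 1 := psZpow_zero (1 + w)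
  have cZ : ∀ r : ℤ, constantCoeff (Z r) = 1 := constantCoeff_psZpow (1 + w) hT1
  have DT : d⁄dX ℚ (1 + w) = d⁄dX ℚ w := by
    rw [map_add]
    simp
  have DZ : ∀ r : ℤ, d⁄dX ℚ (Z r) = PowerSeries.C (r : ℚ) * Z (r - 1) * d⁄dX ℚ w := by
    intro r
    rw [hZdef, psZpow_deriv (1 + w) hT0 r, DT]
  -- derivative of the functional equation
  have hA : d⁄dX ℚ w = Z m + PowerSeries.C (m : ℚ) * X * Z (m - 1) * d⁄dX ℚ w := by
    conv_lhs => rw [hw]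
    rw [Derivation.leibniz, smul_eq_mul, smul_eq_mul, derivative_X, DZ]
    ring
  have TT : Z (1 - m) * d⁄dX ℚ w = (1 + w) + PowerSeries.C (m : ℚ) * X * d⁄dX ℚ w := by
    have a1 : Z (1 - m) * Z m = Z 1 := add' _ _ _ (by ring)
    have a2 : Z (1 - m) * Z (m - 1) = Z 0 := add' _ _ _ (by ring)
    linear_combination Z (1 - m) * hA + a1 + z1 +
      (PowerSeries.C (m : ℚ) * X * d⁄dX ℚ w) * a2 +
      (PowerSeries.C (m : ℚ) * X * d⁄dX ℚ w) * z0
  have c1w : coeff 1 w = 1 := by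
    conv_lhs => rw [hw]
    rw [show (1 : ℕ) = 0 + 1 from rfl, coeff_succ_X_mul, coeff_zero_eq_constantCoeff, cZ]
  have cDw : constantCoeff (d⁄dX ℚ w) = 1 := by
    rw [← coeff_zero_eq_constantCoeff, coeff_derivative, c1w]
    norm_num
  have const_all : ∀ a b : ℤ, coeff 0 (d⁄dX ℚ w * Z a * Z b) = 1 := by
    intro a b
    rw [coeff_zero_eq_constantCoeff, map_mul, map_mul, cDw, cZ, cZ]
    norm_num
  -- the residue lemma
  have L1 : ∀ d : ℕ, coeff (d + 1) (d⁄dX ℚ w * Z (-(m * ((d : ℤ) + 1 + 1)))) = 0 := by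
    intro d
    set e : ℤ := (d : ℤ) + 1 with he
    have b1 : Z (-(m * e)) = Z (-(m * e) - 1) * (1 + w) := by
      rw [← z1]; exact (add' _ _ _ (by ring)).symm
    have b2 : Z (-(m * e) - 1) * Z (1 - m) = Z (-(m * (e + 1))) := add' _ _ _ (by ring)
    have hDP : d⁄dX ℚ (Z (-(m * e))) =
        PowerSeries.C (-(e : ℚ)) * PowerSeries.C (m : ℚ) * Z (-(m * e) - 1) * d⁄dX ℚ w := by
      rw [DZ, ← map_mul]
      congr 2
      push_cast
      ring
    have KI : PowerSeries.C (-(e : ℚ)) * Z (-(m * e)) + X * d⁄dX ℚ (Z (-(m * e))) =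
        PowerSeries.C (-(e : ℚ)) * (Z (-(m * (e + 1))) * d⁄dX ℚ w) := by
      rw [hDP]
      linear_combination (PowerSeries.C (-(e : ℚ))) * b1 -
        (PowerSeries.C (-(e : ℚ)) * Z (-(m * e) - 1)) * TT +
        (PowerSeries.C (-(e : ℚ)) * d⁄dX ℚ w) * b2
    have hc := congrArg (coeff (d + 1)) KI
    rw [map_add, coeff_C_mul, coeff_succ_X_mul, coeff_derivative, coeff_C_mul] at hc
    have hne : ((d : ℚ) + 1) ≠ 0 := by positivity
    have he' : (e : ℚ) = (d : ℚ) + 1 := by rw [he]; push_cast; ring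
    rw [he'] at hc
    have : (0 : ℚ) = -((d : ℚ) + 1) * coeff (d + 1) (Z (-(m * (e + 1))) * d⁄dX ℚ w) := by
      linear_combination hc
    have h2 : coeff (d + 1) (Z (-(m * (e + 1))) * d⁄dX ℚ w) = 0 := by
      by_contra hcon
      apply hne
      have := mul_eq_zero.mp this.symm
      rcases this with h | h
      · linarith [neg_eq_zero.mp h]
      · exact absurd h hcon
    rw [mul_comm (d⁄dX ℚ w)]
    exact h2
  -- successor relation
  have zsucc : ∀ s t : ℤ, s + 1 = t → Z t = Z s + X * Z (m + s) := by
    intro s t hst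
    have h1 : Z 1 * Z s = Z t := add' _ _ _ (by rw [← hst]; ring)
    have h2 : Z m * Z s = Z (m + s) := add' _ _ _ rfl
    rw [z1] at h1
    calc Z t = (1 + w) * Z s := h1.symm
    _ = Z s + w * Z s := by ring
    _ = Z s + X * Z (m + s) := by rw [hw, mul_assoc, h2]
  -- main induction
  have MP : ∀ r : ℤ, ∀ n : ℕ,
      coeff n (d⁄dX ℚ w * Z (-(m * ((n : ℤ) + 1))) * Z r) = gchoose (r : ℚ) n := by
    intro r
    induction r using Int.induction_on with
    | zero =>
      intro n
      cases n with
      | zero => rw [const_all, gchoose_zero_right]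
      | succ k =>
        rw [z0, mul_one]
        push_cast
        rw [L1 k]
        exact (gchoose_zero_left (k + 1) k.succ_ne_zero).symm
    | succ i ih =>
      intro n
      cases n with
      | zero => rw [const_all, gchoose_zero_right]
      | succ k =>
        have zs := zsucc (i : ℤ) ((i : ℤ) + 1) rfl
        rw [zs, mul_add, map_add]
        have x1 : Z (-(m * ((((k : ℕ) + 1 : ℕ) : ℤ) + 1))) * Z (m + (i : ℤ)) =
            Z (-(m * ((k : ℤ) + 1)) + (i : ℤ)) := add' _ _ _ (by push_cast; ring)
        have x2 : Z (-(m * ((k : ℤ) + 1))) * Z (i : ℤ) =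
            Z (-(m * ((k : ℤ) + 1)) + (i : ℤ)) := add' _ _ _ rfl
        have e2 : d⁄dX ℚ w * Z (-(m * ((((k : ℕ) + 1 : ℕ) : ℤ) + 1))) * (X * Z (m + (i : ℤ))) =
            X * (d⁄dX ℚ w * Z (-(m * ((k : ℤ) + 1))) * Z (i : ℤ)) := by
          linear_combination (X * d⁄dX ℚ w) * x1 - (X * d⁄dX ℚ w) * x2
        rw [e2, coeff_succ_X_mul, ih (k + 1), ih k]
        push_cast
        exact (gchoose_pascal (i : ℚ) k).symm
    | pred i ih =>
      intro n
      induction n with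
      | zero => rw [const_all, gchoose_zero_right]
      | succ k ihk =>
        have zs := zsucc (-(i : ℤ) - 1) (-(i : ℤ)) (by ring)
        have x1 : Z (-(m * ((((k : ℕ) + 1 : ℕ) : ℤ) + 1))) * Z (m + (-(i : ℤ) - 1)) =
            Z (-(m * ((k : ℤ) + 1)) + (-(i : ℤ) - 1)) := add' _ _ _ (by push_cast; ring)
        have x2 : Z (-(m * ((k : ℤ) + 1))) * Z (-(i : ℤ) - 1) =
            Z (-(m * ((k : ℤ) + 1)) + (-(i : ℤ) - 1)) := add' _ _ _ rfl
        have e3 : d⁄dX ℚ w * Z (-(m * ((((k : ℕ) + 1 : ℕ) : ℤ) + 1))) * Z (-(i : ℤ) - 1) =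
            d⁄dX ℚ w * Z (-(m * ((((k : ℕ) + 1 : ℕ) : ℤ) + 1))) * Z (-(i : ℤ)) -
            X * (d⁄dX ℚ w * Z (-(m * ((k : ℤ) + 1))) * Z (-(i : ℤ) - 1)) := by
          linear_combination (-(d⁄dX ℚ w * Z (-(m * ((((k : ℕ) + 1 : ℕ) : ℤ) + 1))))) * zs -
            (X * d⁄dX ℚ w) * x1 + (X * d⁄dX ℚ w) * x2
        rw [e3, map_sub, coeff_succ_X_mul, ih (k + 1), ihk]
        push_cast
        have pas := gchoose_pascal (-(i : ℚ) - 1) k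
        rw [show (-(i : ℚ) - 1 + 1) = -(i : ℚ) by ring] at pas
        linear_combination pas
  -- the series of generalized central binomial coefficients
  have hS : (PowerSeries.mk fun k => gchoose ((m : ℚ) * k) k) = d⁄dX ℚ w * Z (-m) := by
    ext n
    rw [coeff_mk]
    have x1 : Z (-(m * ((n : ℤ) + 1))) * Z (m * (n : ℤ)) = Z (-m) := add' _ _ _ (by ring)
    rw [← x1, ← mul_assoc, MP (m * (n : ℤ)) n]
    congr 1
    push_cast
    ring
  have key : (1 + PowerSeries.C (1 - (m : ℚ)) * w) =
      (1 + w) * (1 - PowerSeries.C (m : ℚ) * X * Z (m - 1)) := by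
    have x1 : Z (m - 1) * Z 1 = Z m := add' _ _ _ (by ring)
    have cm : PowerSeries.C (1 - (m : ℚ)) = 1 - PowerSeries.C (m : ℚ) := by
      rw [map_sub, map_one]
    rw [cm, ← z1]
    linear_combination (PowerSeries.C (m : ℚ) * X) * x1 - PowerSeries.C (m : ℚ) * hw - z1
  have key2 : (1 - PowerSeries.C (m : ℚ) * X * Z (m - 1)) * d⁄dX ℚ w = Z m := by
    linear_combination hA
  rw [hS, key]
  have x3 : Z m * Z (-m) = Z 0 := add' _ _ _ (by ring)
  linear_combination ((1 + w) * Z (-m)) * key2 + (1 + w) * x3 + (1 + w) * z0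
end

section
/- Let m be a nonzero integer and let w ∈ ℚ[[u]] be a formal power series with zero constant coefficient satisfying w = u·(1 + w)^m. Then (1 + (1 − m)·w) · Σ_{k≥1} C(m·k, k)·u^k = m·w in ℚ[[u]]. -/
open PowerSeries

/-- Falling-style product `x(x-1)⋯(x-k+1)`. -/
noncomputable def dd (x : ℚ) (k : ℕ) : ℚ := ∏ i ∈ Finset.range k, (x - i)

lemma dd_succ (x : ℚ) (k : ℕ) : dd x (k+1) = dd x k * (x - k) := Finset.prod_range_succ _ _

lemma dd_succ' (x : ℚ) (k : ℕ) : dd x (k+1) = x * dd (x-1) k := by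
  rw [dd, Finset.prod_range_succ', mul_comm]
  congr 1
  · norm_num
  · apply Finset.prod_congr rfl; intro i _; push_cast; ring

lemma gchoose_eq_dd (a : ℚ) (b : ℕ) : gchoose a b = dd a b / (Nat.factorial b) := rfl

lemma fact_cast_succ (n : ℕ) : ((Nat.factorial (n+2) : ℚ)) = ((n:ℚ)+2) * (Nat.factorial (n+1)) := by
  rw [show n+2 = (n+1)+1 from rfl, Nat.factorial_succ]; push_cast; ring

lemma fact_ne (n : ℕ) : ((Nat.factorial n : ℚ)) ≠ 0 :=
  Nat.cast_ne_zero.mpr (Nat.factorial_ne_zero _)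

lemma step_pos (a s : ℚ) (n : ℕ) :
    s * dd (a*((n:ℚ)+2) + s - 1) (n+1) / (Nat.factorial (n+2))
      + (s+a) * dd (a*((n:ℚ)+2) + s - 1) n / (Nat.factorial (n+1))
    = (s+1) * dd (a*((n:ℚ)+2) + s) (n+1) / (Nat.factorial (n+2)) := by
  rw [dd_succ, dd_succ', fact_cast_succ]
  have h1 := fact_ne (n+1)
  have h2 : ((n:ℚ)+2) ≠ 0 := by positivity
  field_simp
  ring

lemma step_neg (a r : ℚ) (n : ℕ) :
    r * dd (a*((n:ℚ)+2) + r - 1) (n+1) / (Nat.factorial (n+2))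
      - (r+a-1) * dd (a*((n:ℚ)+2) + r - 1 - 1) n / (Nat.factorial (n+1))
    = (r-1) * dd (a*((n:ℚ)+2) + r - 1 - 1) (n+1) / (Nat.factorial (n+2)) := by
  rw [dd_succ', dd_succ, fact_cast_succ]
  have h1 := fact_ne (n+1)
  have h2 : ((n:ℚ)+2) ≠ 0 := by positivity
  field_simp
  ring

lemma step_g (a : ℚ) (t : ℕ) :
    dd (a*((t:ℚ)+2)) (t+2) / (Nat.factorial (t+2))
    = ((a-1)*(((t:ℚ)+2)) + 1) * (a * dd (a*((t:ℚ)+2) - 1) t / (Nat.factorial (t+1))) := by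
  rw [show t+2 = (t+1)+1 from rfl, dd_succ', dd_succ, fact_cast_succ]
  have h1 := fact_ne (t+1)
  have h2 : ((t:ℚ)+2) ≠ 0 := by positivity
  field_simp
  ring

/-- If `w` has zero constant coefficient and satisfies `w = u(1+w)^m`, then
`(1 + (1−m)w) · Σ_{k≥1} C(mk, k) u^k = m·w`. -/
theorem generating_function_identity_tail (m : ℤ) (hm : m ≠ 0) (w : PowerSeries ℚ)
    (hw0 : constantCoeff w = 0) (hw : w = X * psZpow (1 + w) m) :
    (1 + PowerSeries.C (1 - (m : ℚ)) * w) *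
        (PowerSeries.mk fun k => if k = 0 then 0 else gchoose ((m : ℚ) * k) k) =
      PowerSeries.C (m : ℚ) * w := by
  set B : PowerSeries ℚ := 1 + w with hB
  have hB0 : constantCoeff B = 1 := by simp [hB, hw0]
  have hBne : constantCoeff B ≠ 0 := by rw [hB0]; norm_num
  set Bu : (PowerSeries ℚ)ˣ := ⟨B, B⁻¹, PowerSeries.mul_inv_cancel B hBne,
    PowerSeries.inv_mul_cancel B hBne⟩ with hBu
  have hpz : ∀ r : ℤ, psZpow B r = ↑(Bu ^ r) := by
    intro r
    by_cases h : 0 ≤ r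
    · obtain ⟨k, rfl⟩ := Int.eq_ofNat_of_zero_le h
      rw [psZpow, if_pos h, zpow_natCast, Units.val_pow_eq_pow_val]
      simp [hBu]
    · push_neg at h
      have h1 : Bu ^ r = (Bu⁻¹) ^ (-r).toNat := by
        rw [← zpow_natCast, Int.toNat_of_nonneg (by omega), inv_zpow, ← zpow_neg, neg_neg]
      rw [psZpow, if_neg (not_le.mpr h), h1, Units.val_pow_eq_pow_val]
      rfl
  have hcc : ∀ r : ℤ, constantCoeff (↑(Bu ^ r) : PowerSeries ℚ) = 1 := by
    intro r
    have h1 : Units.map (constantCoeff).toMonoidHom Bu = 1 := Units.ext (by simpa using hB0)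
    have h2 : constantCoeff (↑(Bu ^ r) : PowerSeries ℚ) = ↑(Units.map (constantCoeff).toMonoidHom (Bu ^ r)) :=
      (Units.coe_map _ _).symm
    rw [h2, map_zpow, h1, one_zpow, Units.val_one]
  have hwP : w = X * (↑(Bu ^ m) : PowerSeries ℚ) := by rw [hw, hpz]
  have hrec : ∀ (n : ℕ) (r : ℤ),
      coeff (n+1) (↑(Bu ^ r) : PowerSeries ℚ) = coeff (n+1) (↑(Bu ^ (r-1)) : PowerSeries ℚ) + coeff n (↑(Bu ^ (r-1+m)) : PowerSeries ℚ) := by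
    intro n r
    have hsplit : (↑(Bu ^ r) : PowerSeries ℚ)
        = (↑(Bu ^ (r-1)) : PowerSeries ℚ) + X * (↑(Bu ^ (r-1+m)) : PowerSeries ℚ) := by
      have h1 : Bu ^ r = Bu ^ (r-1) * Bu := by rw [← zpow_add_one, sub_add_cancel]
      have h2 : Bu ^ (r-1+m) = Bu ^ (r-1) * Bu ^ m := by rw [← zpow_add]
      have h3 : (↑Bu : PowerSeries ℚ) = 1 + w := rfl
      rw [h1, h2, Units.val_mul, Units.val_mul, h3, hwP]
      ring
    rw [hsplit, map_add, coeff_succ_X_mul]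
  have key : ∀ (n : ℕ) (r : ℤ), coeff (n+1) (↑(Bu ^ r) : PowerSeries ℚ)
      = (r : ℚ) * dd ((m : ℚ) * ((n : ℚ)+1) + (r : ℚ) - 1) n / (Nat.factorial (n+1)) := by
    intro n
    induction n with
    | zero =>
      intro r
      induction r using Int.induction_on with
      | zero => simp [dd]
      | succ s ih =>
        have h := hrec 0 ((s:ℤ)+1)
        rw [show ((s:ℤ)+1-1) = (s:ℤ) from by ring] at h
        rw [ih, coeff_zero_eq_constantCoeff_apply, hcc] at h
        rw [h]
        simp only [dd, Finset.prod_range_zero, Nat.factorial]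
        push_cast
        ring
      | pred s ih =>
        have h := hrec 0 (-(s:ℤ))
        rw [show (-(s:ℤ)-1) = (-(s:ℤ)-1) from rfl] at h
        rw [ih, coeff_zero_eq_constantCoeff_apply, hcc] at h
        simp only [dd, Finset.prod_range_zero, Nat.factorial] at h ⊢
        push_cast at h ⊢
        linarith
    | succ n ih =>
      intro r
      induction r using Int.induction_on with
      | zero => simp
      | succ s ihs =>
        have h := hrec (n+1) ((s:ℤ)+1)
        rw [show ((s:ℤ)+1-1) = (s:ℤ) from by ring] at h
        rw [ihs, ih ((s:ℤ)+m)] at h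
        rw [h]
        have hst := step_pos (m:ℚ) (s:ℚ) n
        push_cast at hst ⊢
        ring_nf at hst ⊢
        linear_combination hst
      | pred s ihs =>
        have h := hrec (n+1) (-(s:ℤ))
        rw [ihs, ih (-(s:ℤ)-1+m)] at h
        have hst := step_neg (m:ℚ) (-(s:ℚ)) n
        push_cast at hst h ⊢
        ring_nf at hst h ⊢
        linear_combination -h + hst
  -- the derivative identity
  have hdB : d⁄dX ℚ B = d⁄dX ℚ w := by
    rw [hB, map_add]
    simp
  have hlog : ∀ k : ℤ, B * (d⁄dX ℚ ↑(Bu ^ k))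
      = (PowerSeries.C (k:ℚ)) * ↑(Bu ^ k) * d⁄dX ℚ B := by
    intro k
    induction k using Int.induction_on with
    | zero => simp
    | succ s ih =>
      have h1 : Bu ^ ((s:ℤ)+1) = Bu ^ (s:ℤ) * Bu := by rw [← zpow_add_one]
      have h3 : (↑Bu : PowerSeries ℚ) = B := rfl
      rw [h1, Units.val_mul, h3, Derivation.leibniz, smul_eq_mul, smul_eq_mul]
      have hC : PowerSeries.C (((s:ℤ)+1 : ℤ):ℚ) = PowerSeries.C ((s:ℤ):ℚ) + 1 := by
        rw [show (((s:ℤ)+1 : ℤ):ℚ) = ((s:ℤ):ℚ) + 1 from by push_cast; ring, map_add, map_one]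
      rw [hC]
      linear_combination (B : PowerSeries ℚ) * ih + (↑(Bu^(s:ℤ)) * B - B * ↑(Bu^(s:ℤ))) * d⁄dX ℚ B
    | pred s ih =>
      apply mul_left_cancel₀ (show B ≠ 0 from fun h => by simp [h] at hB0)
      have h1 : Bu ^ (-(s:ℤ)) = Bu ^ (-(s:ℤ)-1) * Bu := by rw [← zpow_add_one]; norm_num
      have h3 : (↑Bu : PowerSeries ℚ) = B := rfl
      have h4 : (↑(Bu ^ (-(s:ℤ))) : PowerSeries ℚ) = ↑(Bu ^ (-(s:ℤ)-1)) * B := by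
        rw [h1, Units.val_mul, h3]
      have h5 := congrArg (d⁄dX ℚ) h4
      rw [Derivation.leibniz, smul_eq_mul, smul_eq_mul] at h5
      have hC : PowerSeries.C ((-(s:ℤ)-1 : ℤ):ℚ) = PowerSeries.C ((-(s:ℤ) : ℤ):ℚ) - 1 := by
        rw [show ((-(s:ℤ)-1 : ℤ):ℚ) = ((-(s:ℤ):ℤ):ℚ) - 1 from by push_cast; ring, map_sub, map_one]
      rw [hC]
      have := congrArg (fun z => B * z) h5
      rw [ih] at this
      linear_combination -this + (PowerSeries.C ((-(s:ℤ):ℤ):ℚ) * d⁄dX ℚ B) * h4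
  have hdw : d⁄dX ℚ w = (↑(Bu^m) : PowerSeries ℚ) + X * d⁄dX ℚ (↑(Bu^m) : PowerSeries ℚ) := by
    conv_lhs => rw [hwP]
    rw [Derivation.leibniz, smul_eq_mul, smul_eq_mul, derivative_X, mul_one]
    ring
  have hC1 : PowerSeries.C (1-(m:ℚ)) = 1 - PowerSeries.C (m:ℚ) := by rw [map_sub, map_one]
  have hC2 : PowerSeries.C ((m:ℚ)-1) = PowerSeries.C (m:ℚ) - 1 := by rw [map_sub, map_one]
  have hstar : (X * d⁄dX ℚ w) * (1 + PowerSeries.C (1-(m:ℚ)) * w) = w * (1 + w) := by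
    have h1 : B * (X * d⁄dX ℚ w)
        = B * w + PowerSeries.C (m:ℚ) * w * (X * d⁄dX ℚ w) := by
      linear_combination (B*X) * hdw + (X*X) * (hlog m)
        + (X*X*PowerSeries.C (m:ℚ)*(↑(Bu^m) : PowerSeries ℚ)) * hdB
        - (B + PowerSeries.C (m:ℚ)*X*d⁄dX ℚ w) * hwP
    rw [hC1]
    rw [hB] at h1
    linear_combination h1
  have hG : (PowerSeries.mk fun k => if k = 0 then 0 else gchoose ((m:ℚ) * k) k)
      = PowerSeries.C ((m:ℚ)-1) * (X * d⁄dX ℚ w) + w := by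
    ext k
    rw [coeff_mk]
    cases k with
    | zero =>
      rw [if_pos rfl, coeff_zero_eq_constantCoeff_apply]
      simp [hw0]
    | succ n =>
      rw [if_neg (Nat.succ_ne_zero n)]
      rw [map_add, coeff_C_mul, coeff_succ_X_mul, coeff_derivative]
      have hwc : coeff (n+1) w = coeff n (↑(Bu^m) : PowerSeries ℚ) := by
        conv_lhs => rw [hwP]
        rw [coeff_succ_X_mul]
      cases n with
      | zero =>
        rw [hwc, coeff_zero_eq_constantCoeff_apply, hcc]
        simp [gchoose, Nat.factorial]
      | succ t =>
        rw [hwc, key t m, gchoose_eq_dd]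
        have hst := step_g (m:ℚ) t
        push_cast at hst ⊢
        ring_nf at hst ⊢
        linear_combination hst
  rw [hG, hC1, hC2]
  rw [hC1] at hstar
  linear_combination (PowerSeries.C (m:ℚ) - 1) * hstar
end
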